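/- Let Z be an n-dimensional naturally graded p-filiform complex Zinbiel algebra of second type, i.e., Z admits a basis {e_1, …, e_{n−p}, f_1, …, f_p} with e_1∘e_1 = 0, e_1∘e_i = e_{i+1} for 2 ≤ i ≤ n−p−1, e_1∘e_{n−p} = f_1 and e_1∘f_j = 0 for 1 ≤ j ≤ p. Then n − p ≤ 3. -/
import Mathlib


open Module Submodule

/-- The Zinbiel identity for a bilinear operation `mul` on a complex vector space:
`(x∘y)∘z = x∘(y∘z) + x∘(z∘y)`. -/
def IsZinbiel {Z : Type*} [AddCommGroup Z] [Module ℂ Z] (mul : Z →ₗ[ℂ] Z →ₗ[ℂ] Z) : Prop :=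
  ∀ x y z : Z, mul (mul x y) z = mul x (mul y z) + mul x (mul z y)
/-- The adapted family `e_1, …, e_m, f_1, …, f_p` indexed by `Fin m ⊕ Fin p`. -/
def adaptedFam {Z : Type*} (m p : ℕ) (e f : ℕ → Z) : Fin m ⊕ Fin p → Z :=
  Sum.elim (fun i => e ((i : ℕ) + 1)) (fun j => f ((j : ℕ) + 1))

/-- Proposition 1 (`prode`): a `p`-filiform `n`-dimensional complex Zinbiel algebra of
second type, i.e. one admitting a basis `{e_1, …, e_{n-p}, f_1, …, f_p}` with
`e_1 ∘ e_1 = 0`, `e_1 ∘ e_i = e_{i+1}` for `2 ≤ i ≤ n-p-1`, `e_1 ∘ e_{n-p} = f_1` and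
`e_1 ∘ f_j = 0` for `1 ≤ j ≤ p`, satisfies `n - p ≤ 3`. -/
theorem second_type_dim_le_three
    {Z : Type*} [AddCommGroup Z] [Module ℂ Z]
    (mul : Z →ₗ[ℂ] Z →ₗ[ℂ] Z) (hzin : IsZinbiel mul)
    (n p : ℕ) (hp : 1 ≤ p) (hpn : p < n)
    (e f : ℕ → Z)
    (hli : LinearIndependent ℂ (adaptedFam (n - p) p e f))
    (hsp : Submodule.span ℂ (Set.range (adaptedFam (n - p) p e f)) = ⊤)
    (h11 : mul (e 1) (e 1) = 0)
    (hee : ∀ i, 2 ≤ i → i ≤ n - p - 1 → mul (e 1) (e i) = e (i + 1))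
    (hetop : mul (e 1) (e (n - p)) = f 1)
    (hef : ∀ j, 1 ≤ j → j ≤ p → mul (e 1) (f j) = 0) :
    n - p ≤ 3 := by
  by_contra hcon
  push_neg at hcon
  have hm4 : 4 ≤ n - p := hcon
  have h12 : mul (e 1) (e 2) = e 3 := hee 2 (by omega) (by omega)
  have h13 : mul (e 1) (e 3) = e 4 := hee 3 (by omega) (by omega)
  have hA : mul (e 1) (mul (e 2) (e 1)) = - e 4 := by
    have h := hzin (e 1) (e 1) (e 2)
    rw [h11, h12, h13] at h
    simp only [map_zero, LinearMap.zero_apply] at h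
    exact eq_neg_of_add_eq_zero_right h.symm
  have hB : mul (e 3) (e 1) = 0 := by
    have h := hzin (e 1) (e 2) (e 1)
    rw [h12, hA, h13, neg_add_cancel] at h
    exact h
  have hC : mul (e 1) (e 4) = 0 := by
    have h := hzin (e 1) (e 1) (e 3)
    rw [h11, h13, hB] at h
    simp only [map_zero, LinearMap.zero_apply, add_zero] at h
    exact h.symm
  rcases eq_or_lt_of_le hm4 with h4 | h5
  · -- n - p = 4, so e1 ∘ e4 = f 1 ≠ 0
    have hf1 : mul (e 1) (e 4) = f 1 := by rw [← h4] at hetop; exact hetop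
    have hne : f 1 ≠ 0 := by
      have := hli.ne_zero (Sum.inr ⟨0, by omega⟩)
      simpa [adaptedFam] using this
    exact hne (hf1 ▸ hC)
  · -- n - p ≥ 5, so e1 ∘ e4 = e 5 ≠ 0
    have h14 : mul (e 1) (e 4) = e 5 := hee 4 (by omega) (by omega)
    have hne : e 5 ≠ 0 := by
      have := hli.ne_zero (Sum.inl ⟨4, by omega⟩)
      simpa [adaptedFam] using this
    exact hne (h14 ▸ hC)
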